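/- Let ms : ℕ × ℕ → ℕ be the function determined by ms(e,f) = ms(f,e), ms(e,0) = ms(e,1) = 0, and ms(e,f) = f + ms(e−f, f) for e ≥ f ≥ 2. Then for all e, f ≥ 1 with (e,f) ≠ (1,1), one has ms(e,f) ≤ e + f − R(e,f), where R(e,f) = gcd(e,f) if gcd(e,f) > 1, and R(e,f) = 3 if gcd(e,f) = 1. -/

import Mathlib

/-- The correction term `R(e,f)`: `gcd e f` if `gcd e f > 1`, and `3` otherwise. -/
def Rcorr (e f : ℕ) : ℕ := if 1 < Nat.gcd e f then Nat.gcd e f else 3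

lemma Rcorr_comm (e f : ℕ) : Rcorr e f = Rcorr f e := by
  simp [Rcorr, Nat.gcd_comm]

/-- For the multiplicity-sum function `ms` determined by symmetry,
`ms e 0 = ms e 1 = 0`, and the Euclidean recursion, one has
`ms e f ≤ e + f - R(e,f)` for all `e, f ≥ 1` with `(e,f) ≠ (1,1)`. -/
theorem ms_bound (ms : ℕ → ℕ → ℕ)
    (hsymm : ∀ e f, ms e f = ms f e)
    (hzero : ∀ e, ms e 0 = 0)
    (hone : ∀ e, ms e 1 = 0)
    (hrec : ∀ e f, 2 ≤ f → f ≤ e → ms e f = f + ms (e - f) f)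
    (e f : ℕ) (he : 1 ≤ e) (hf : 1 ≤ f) (hne : (e, f) ≠ (1, 1)) :
    (ms e f : ℤ) ≤ e + f - Rcorr e f := by
  have key : ∀ n e f, e + f ≤ n → 1 ≤ e → 1 ≤ f → f ≤ e → (e, f) ≠ (1, 1) →
      (ms e f : ℤ) ≤ e + f - Rcorr e f := by
    intro n
    induction n with
    | zero => intro e f h he hf _ _; omega
    | succ n ih =>
      intro e f hn he hf hfe hne
      rcases Nat.lt_or_ge f 2 with h2 | h2
      · -- f = 1
        have hf1 : f = 1 := by omega
        subst hf1
        have he2 : 2 ≤ e := by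
          rcases Nat.lt_or_ge e 2 with h | h
          · have : e = 1 := by omega
            subst this; simp at hne
          · exact h
        have hms : ms e 1 = 0 := hone e
        have hg : Nat.gcd e 1 = 1 := Nat.gcd_one_right e
        simp only [Rcorr, hg, hms]
        norm_num
        omega
      · rcases eq_or_lt_of_le hfe with heq | hlt
        · -- e = f
          subst heq
          have hms : ms f f = f := by
            rw [hrec f f h2 le_rfl, Nat.sub_self, hsymm, hzero]; omega
          have hg : Nat.gcd f f = f := Nat.gcd_self f
          rw [hms]
          simp only [Rcorr, hg]
          rw [if_pos (by omega)]
          omega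
        · -- f < e
          have hrec' : ms e f = f + ms (e - f) f := hrec e f h2 (le_of_lt hlt)
          have hg : Nat.gcd (e - f) f = Nat.gcd e f :=
            Nat.gcd_sub_self_left (le_of_lt hlt)
          have hR : Rcorr (e - f) f = Rcorr e f := by simp [Rcorr, hg]
          have he' : 1 ≤ e - f := by omega
          have hsum : (e - f) + f ≤ n := by omega
          have hsub : (ms (e - f) f : ℤ) ≤ (e - f : ℕ) + f - Rcorr (e - f) f := by
            rcases le_or_gt f (e - f) with hle | hgt
            · exact ih (e - f) f hsum he' hf hle (by
                intro hcontra
                have := Prod.mk.injEq (e - f) f 1 1 ▸ hcontra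
                simp at hcontra; omega)
            · have := ih f (e - f) (by omega) hf he' (le_of_lt hgt) (by
                intro hcontra; simp at hcontra; omega)
              rw [hsymm]
              calc (ms f (e - f) : ℤ) ≤ f + (e - f : ℕ) - Rcorr f (e - f) := this
                _ = (e - f : ℕ) + f - Rcorr (e - f) f := by
                    rw [Rcorr_comm]; ring
          rw [hrec']
          rw [hR] at hsub
          push_cast at hsub ⊢
          have : ((e : ℤ) - f) = ((e - f : ℕ) : ℤ) := by omega
          omega
  rcases le_or_gt f e with hle | hlt
  · exact key (e + f) e f le_rfl he hf hle hne
  · rw [hsymm, Rcorr_comm]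
    have := key (f + e) f e le_rfl hf he (le_of_lt hlt) (by
      intro hcontra; simp at hcontra; apply hne; omega)
    calc (ms f e : ℤ) ≤ f + e - Rcorr f e := this
      _ = e + f - Rcorr f e := by ring
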